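/- Let p be an odd prime and consider the symmetric group Σ_p acting on the n-th space Lie_p of the Lie operad over a field k of characteristic p. For any tree T in the set T_{p,s} of rooted trees with p leaves and s ≥ 2 internal vertices, the stabilizer Σ_T ⊆ Σ_p of T contains a transposition; hence the coinvariants (sgn)_{Σ_T} of the sign representation vanish. -/

import Mathlib

/-- Rooted trees with leaves labelled by `Fin p` (presented with an ordering of children;
non-planarity is imposed by the reordering equivalence `TIso` below). -/
inductive PTree (p : ℕ) : Type where
  | leaf : Fin p → PTree p
  | node : List (PTree p) → PTree p

/-- The multiset of leaf labels of a tree. -/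
def PTree.labels {p : ℕ} : PTree p → Multiset (Fin p)
  | .leaf a => {a}
  | .node ts => ((ts.attach.map fun ⟨t, _⟩ => t.labels)).sum

/-- The number of internal vertices of a tree. -/
def PTree.internalCount {p : ℕ} : PTree p → ℕ
  | .leaf _ => 0
  | .node ts => 1 + ((ts.attach.map fun ⟨t, _⟩ => t.internalCount)).sum

/-- Every internal vertex has at least two children. -/
def PTree.arityOK {p : ℕ} : PTree p → Prop
  | .leaf _ => True
  | .node ts => 2 ≤ ts.length ∧ ((ts.attach.map fun ⟨t, _⟩ => t.arityOK).foldr And True)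

/-- Relabelling the leaves of a tree by a permutation. -/
def PTree.relabel {p : ℕ} (σ : Equiv.Perm (Fin p)) : PTree p → PTree p
  | .leaf a => .leaf (σ a)
  | .node ts => .node (ts.attach.map fun ⟨t, _⟩ => t.relabel σ)

/-- One-step reordering of children (the generating moves for non-planar equality). -/
inductive Reorder (p : ℕ) : PTree p → PTree p → Prop where
  | swap (ts us : List (PTree p)) (a b : PTree p) :
      Reorder p (.node (ts ++ a :: b :: us)) (.node (ts ++ b :: a :: us))
  | congr (ts us : List (PTree p)) (a b : PTree p) :
      Reorder p a b → Reorder p (.node (ts ++ a :: us)) (.node (ts ++ b :: us))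

/-- Isomorphism of labelled rooted trees as non-planar trees: the equivalence relation
generated by reordering children. -/
def TIso (p : ℕ) : PTree p → PTree p → Prop :=
  Relation.EqvGen (Reorder p)

-- simp lemmas
theorem PTree.labels_node {p : ℕ} (ts : List (PTree p)) :
    (PTree.node ts).labels = (ts.map PTree.labels).sum := by
  rw [PTree.labels, List.attach_map_val]

theorem PTree.relabel_node {p : ℕ} (σ : Equiv.Perm (Fin p)) (ts : List (PTree p)) :
    (PTree.node ts).relabel σ = .node (ts.map (PTree.relabel σ)) := by
  rw [PTree.relabel, List.attach_map_val]

theorem PTree.arityOK_node {p : ℕ} {ts : List (PTree p)} (h : (PTree.node ts).arityOK) :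
    ∀ t ∈ ts, t.arityOK := by
  rw [PTree.arityOK] at h
  obtain ⟨-, h⟩ := h
  intro t ht
  induction ts with
  | nil => simp at ht
  | cons a l ih =>
    simp only [List.attach_cons, List.map_cons, List.map_map, List.foldr_cons] at h
    rcases List.mem_cons.mp ht with rfl | ht
    · exact h.1
    · exact ih (by simpa [Function.comp_def] using h.2) ht

-- helper: strong recursion principle
theorem PTree.strongRecOn {p : ℕ} {motive : PTree p → Prop}
    (leaf : ∀ a, motive (.leaf a))
    (node : ∀ ts, (∀ t ∈ ts, motive t) → motive (.node ts)) :
    ∀ T, motive T := by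
  have H : ∀ n (T : PTree p), sizeOf T ≤ n → motive T := by
    intro n
    induction n with
    | zero => intro T hT; cases T <;> simp at hT
    | succ n ih =>
      intro T hT
      cases T with
      | leaf a => exact leaf a
      | node ts =>
        refine node ts fun t ht => ih t ?_
        have h1 := List.sizeOf_lt_of_mem ht
        simp only [PTree.node.sizeOf_spec] at hT
        omega
  exact fun T => H (sizeOf T) T le_rfl

theorem le_listsum {α : Type*} (l : List (Multiset α)) {s : Multiset α} (hs : s ∈ l) :
    s ≤ l.sum := by
  induction l with
  | nil => simp at hs
  | cons a l ih =>
    rcases List.mem_cons.mp hs with rfl | hs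
    · simpa using Multiset.le_add_right _ _
    · calc s ≤ l.sum := ih hs
        _ ≤ a + l.sum := Multiset.le_add_left _ _
        _ = (a :: l).sum := by simp

theorem mem_listsum {α : Type*} {l : List (Multiset α)} {a : α} :
    a ∈ l.sum ↔ ∃ s ∈ l, a ∈ s := by
  induction l with
  | nil => simp
  | cons b l ih => simp [ih]

theorem PTree.labels_mem_node {p : ℕ} {ts : List (PTree p)} {t : PTree p} (ht : t ∈ ts) :
    t.labels ≤ (PTree.node ts).labels := by
  rw [PTree.labels_node]
  exact le_listsum _ (List.mem_map_of_mem ht)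

theorem PTree.relabel_fix {p : ℕ} (σ : Equiv.Perm (Fin p)) :
    ∀ (T : PTree p), (∀ c ∈ T.labels, σ c = c) → T.relabel σ = T := by
  refine PTree.strongRecOn (fun a h => ?_) (fun ts ih h => ?_)
  · rw [PTree.relabel]
    have := h a (by simp [PTree.labels])
    rw [this]
  · rw [PTree.relabel_node]
    congr 1
    rw [show ts.map (PTree.relabel σ) = ts.map id from ?_, List.map_id]
    refine List.map_congr_left fun t ht => ih t ht fun c hc => ?_
    exact h c (Multiset.mem_of_le (PTree.labels_mem_node ht) hc)

theorem TIso.node_congr {p : ℕ} (l1 l2 : List (PTree p)) {a b : PTree p} (h : TIso p a b) :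
    TIso p (.node (l1 ++ a :: l2)) (.node (l1 ++ b :: l2)) := by
  induction h with
  | rel x y h => exact .rel _ _ (Reorder.congr l1 l2 x y h)
  | refl x => exact .refl _
  | symm x y _ ih => exact .symm _ _ ih
  | trans x y z _ _ ih1 ih2 => exact .trans _ _ _ ih1 ih2

theorem disj_aux {p : ℕ} {l1 l2 : List (PTree p)} {t t' : PTree p}
    (hnd : (PTree.node (l1 ++ t :: l2)).labels.Nodup) (h' : t' ∈ l1 ++ l2) :
    Disjoint t.labels t'.labels := by
  have hle : t.labels + t'.labels ≤ (PTree.node (l1 ++ t :: l2)).labels := by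
    rw [PTree.labels_node, List.map_append, List.map_cons, List.sum_append, List.sum_cons]
    rcases List.mem_append.mp h' with h'' | h''
    · have := le_listsum _ (List.mem_map_of_mem (f := PTree.labels) h'')
      calc t.labels + t'.labels ≤ t.labels + (l1.map PTree.labels).sum :=
            add_le_add_right this _
        _ ≤ (l1.map PTree.labels).sum + (t.labels + (l2.map PTree.labels).sum) := by
            rw [add_comm]
            exact add_le_add_right (Multiset.le_add_right _ _) _
    · have := le_listsum _ (List.mem_map_of_mem (f := PTree.labels) h'')
      calc t.labels + t'.labels ≤ t.labels + (l2.map PTree.labels).sum :=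
            add_le_add_right this _
        _ ≤ (l1.map PTree.labels).sum + (t.labels + (l2.map PTree.labels).sum) :=
            Multiset.le_add_left _ _
  have := Multiset.nodup_of_le hle hnd
  exact (Multiset.nodup_add.mp this).2.2

theorem PTree.exists_swap {p : ℕ} :
    ∀ (T : PTree p), T.labels.Nodup → T.arityOK → 1 ≤ T.internalCount →
      ∃ a b : Fin p, a ≠ b ∧ a ∈ T.labels ∧ b ∈ T.labels ∧
        TIso p (T.relabel (Equiv.swap a b)) T := by
  refine PTree.strongRecOn (fun a _ _ h => ?_) (fun ts ih hnd har _ => ?_)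
  · simp [PTree.internalCount] at h
  · by_cases hall : ∀ t ∈ ts, ∃ c, t = PTree.leaf c
    · -- all children are leaves
      have hlen : 2 ≤ ts.length := by rw [PTree.arityOK] at har; exact har.1
      match ts, hnd, hall, hlen with
      | t1 :: t2 :: rest, hnd, hall, _ =>
        obtain ⟨a, rfl⟩ := hall t1 (by simp)
        obtain ⟨b, rfl⟩ := hall t2 (by simp)
        rw [PTree.labels_node] at hnd
        simp only [List.map_cons, List.sum_cons, PTree.labels] at hnd
        rw [Multiset.nodup_add] at hnd
        obtain ⟨-, hnd2, hdisj⟩ := hnd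
        have hab : a ≠ b := by
          intro h
          exact Multiset.disjoint_left.mp hdisj (Multiset.mem_singleton_self a)
            (Multiset.mem_add.mpr (Or.inl (by subst h; exact Multiset.mem_singleton_self a)))
        have haS : a ∉ ((rest.map PTree.labels).sum) :=
          fun h => Multiset.disjoint_left.mp hdisj (Multiset.mem_singleton_self a)
            (Multiset.mem_add.mpr (Or.inr h))
        have hbS : b ∉ ((rest.map PTree.labels).sum) := by
          rw [Multiset.nodup_add] at hnd2
          exact fun h => Multiset.disjoint_left.mp hnd2.2.2 (Multiset.mem_singleton_self b) h
        refine ⟨a, b, hab, ?_, ?_, ?_⟩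
        · rw [PTree.labels_node]; simp [PTree.labels]
        · rw [PTree.labels_node]; simp [PTree.labels]
        · rw [PTree.relabel_node]
          simp only [List.map_cons]
          rw [show PTree.relabel (Equiv.swap a b) (PTree.leaf a) = PTree.leaf b by
                rw [PTree.relabel]; rw [Equiv.swap_apply_left],
              show PTree.relabel (Equiv.swap a b) (PTree.leaf b) = PTree.leaf a by
                rw [PTree.relabel]; rw [Equiv.swap_apply_right],
              show rest.map (PTree.relabel (Equiv.swap a b)) = rest from ?_]
          · exact Relation.EqvGen.symm _ _ (Relation.EqvGen.rel _ _
              (by simpa using Reorder.swap (p := p) [] rest (PTree.leaf a) (PTree.leaf b)))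
          · rw [show rest.map (PTree.relabel (Equiv.swap a b)) = rest.map id from ?_,
                List.map_id]
            refine List.map_congr_left fun t ht => PTree.relabel_fix _ t fun c hc => ?_
            have hcS : c ∈ (rest.map PTree.labels).sum :=
              mem_listsum.mpr ⟨t.labels, List.mem_map_of_mem ht, hc⟩
            exact Equiv.swap_apply_of_ne_of_ne
              (fun h => haS (h ▸ hcS)) (fun h => hbS (h ▸ hcS))
    · push_neg at hall
      obtain ⟨t, htmem, htn⟩ := hall
      obtain ⟨us, rfl⟩ : ∃ us, t = PTree.node us := by
        cases t with
        | leaf d => exact (htn d rfl).elim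
        | node us => exact ⟨us, rfl⟩
      obtain ⟨a, b, hab, ha, hb, hiso⟩ :=
        ih _ htmem (Multiset.nodup_of_le (PTree.labels_mem_node htmem) hnd)
          (PTree.arityOK_node har _ htmem)
          (by rw [PTree.internalCount]; omega)
      obtain ⟨l1, l2, rfl⟩ := List.append_of_mem htmem
      refine ⟨a, b, hab, Multiset.mem_of_le (PTree.labels_mem_node htmem) ha,
        Multiset.mem_of_le (PTree.labels_mem_node htmem) hb, ?_⟩
      rw [PTree.relabel_node, List.map_append, List.map_cons]
      have hfix : ∀ t' ∈ l1 ++ l2, (PTree.relabel (Equiv.swap a b)) t' = t' := by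
        intro t' ht'
        refine PTree.relabel_fix _ t' fun c hc => ?_
        have hdj := disj_aux hnd ht'
        exact Equiv.swap_apply_of_ne_of_ne
          (fun h => Multiset.disjoint_left.mp hdj (h ▸ ha) hc)
          (fun h => Multiset.disjoint_left.mp hdj (h ▸ hb) hc)
      rw [show l1.map (PTree.relabel (Equiv.swap a b)) = l1 from ?_,
          show l2.map (PTree.relabel (Equiv.swap a b)) = l2 from ?_]
      · exact TIso.node_congr l1 l2 hiso
      · rw [show l2.map (PTree.relabel (Equiv.swap a b)) = l2.map id from ?_, List.map_id]
        exact List.map_congr_left fun t' ht' => hfix t' (List.mem_append.mpr (Or.inr ht'))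
      · rw [show l1.map (PTree.relabel (Equiv.swap a b)) = l1.map id from ?_, List.map_id]
        exact List.map_congr_left fun t' ht' => hfix t' (List.mem_append.mpr (Or.inl ht'))

/-- Let `p` be an odd prime and `k` a field of characteristic `p`.  For any rooted tree
`T` with `p` leaves labelled bijectively by `{1, …, p}` and at least `s ≥ 2` internal
vertices (each with at least two children), the stabilizer `Σ_T ⊆ Σ_p` of `T` contains a
transposition; hence the coinvariants `(sgn)_{Σ_T}` of the sign representation of `Σ_T`
on `k` vanish. -/
theorem stmt_15 (p : ℕ) [Fact p.Prime] (hodd : Odd p) (k : Type) [Field k] [CharP k p]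
    (T : PTree p) (hlab : T.labels = (Finset.univ : Finset (Fin p)).val)
    (har : T.arityOK) (hs : 2 ≤ T.internalCount) :
    (∃ a b : Fin p, a ≠ b ∧ TIso p (T.relabel (Equiv.swap a b)) T) ∧
    Subsingleton (k ⧸ Submodule.span k {x : k |
      ∃ (σ : Equiv.Perm (Fin p)) (c : k),
        TIso p (T.relabel σ) T ∧ x = c - ((Equiv.Perm.sign σ : ℤ) • c)}) := by
  have hnd : T.labels.Nodup := by rw [hlab]; exact (Finset.univ : Finset (Fin p)).nodup
  obtain ⟨a, b, hab, -, -, hiso⟩ := PTree.exists_swap T hnd har (by omega)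
  refine ⟨⟨a, b, hab, hiso⟩, ?_⟩
  rw [Submodule.Quotient.subsingleton_iff]
  set S := Submodule.span k {x : k |
      ∃ (σ : Equiv.Perm (Fin p)) (c : k),
        TIso p (T.relabel σ) T ∧ x = c - ((Equiv.Perm.sign σ : ℤ) • c)} with hS
  have h2 : (2:k) ∈ S := Submodule.subset_span ⟨Equiv.swap a b, 1, hiso, by
    rw [Equiv.Perm.sign_swap hab]; norm_num⟩
  have h2ne : (2:k) ≠ 0 := by
    intro h
    have hdvd := (CharP.cast_eq_zero_iff k p 2).mp (by exact_mod_cast h)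
    have hle : p ≤ 2 := Nat.le_of_dvd (by norm_num) hdvd
    have h2le : 2 ≤ p := (Fact.out (p := p.Prime)).two_le
    obtain ⟨m, hm⟩ := hodd
    omega
  have h1 : (1:k) ∈ S := by
    have := S.smul_mem (2⁻¹:k) h2
    rwa [smul_eq_mul, inv_mul_cancel₀ h2ne] at this
  exact Submodule.eq_top_iff'.mpr fun x => by simpa using S.smul_mem x h1
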